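/- The Whittle index W_i makes thresholds i and i+1 cost-equivalent (Proposition 4): for every integer i with 1 ≤ i ≤ L−1, C̄(i, W_i) = C̄(i+1, W_i), where W_i := i(i−1)p/2 + i − i(1−p)^{L−i}; moreover, for i = L one has C̄(L, W_L) = L, which is the average cost of the never-schedule policy. -/

import Mathlib

lemma stmt5_gauss (m : ℕ) : ∑ k ∈ Finset.range m, (k : ℝ) = m * (m - 1) / 2 := by
  induction m with
  | zero => simp
  | succ n ih => rw [Finset.sum_range_succ, ih]; push_cast; ring

lemma stmt5_g1 (p : ℝ) (m : ℕ) :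
    p * ∑ k ∈ Finset.range m, (1 - p) ^ k = 1 - (1 - p) ^ m := by
  induction m with
  | zero => simp
  | succ n ih => rw [Finset.sum_range_succ, mul_add, ih, pow_succ]; ring

lemma stmt5_g2 (p : ℝ) (m : ℕ) :
    p ^ 2 * ∑ k ∈ Finset.range m, (k : ℝ) * (1 - p) ^ k
      = (1 - p) - (1 - p) ^ m * ((1 - p) + m * p) := by
  induction m with
  | zero => simp
  | succ n ih => rw [Finset.sum_range_succ, mul_add, ih, pow_succ]; push_cast; ring

/-- **Proposition 4.** Fix `p` with `0 < p < 1` and `L ≥ 2`.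
For each threshold `1 ≤ n ≤ L`, let `u^n` be as in the paper, and for `W ≥ 0`
let `C̄(n, W) := Σ_{i=1}^{L} i·u^n(i) + W·Σ_{i=n}^{L} u^n(i)` be the average
cost of the threshold-`n` policy.  Then the Whittle index
`W_i := i(i−1)p/2 + i − i(1−p)^{L−i}` makes thresholds `i` and `i+1`
cost-equivalent: for every `1 ≤ i ≤ L−1`, `C̄(i, W_i) = C̄(i+1, W_i)`;
moreover `C̄(L, W_L) = L`, the average cost of the never-schedule policy. -/
theorem stmt5 (p : ℝ) (hp0 : 0 < p) (hp1 : p < 1) (L : ℕ) (hL : 2 ≤ L)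
    (u : ℕ → ℕ → ℝ)
    (hu1 : ∀ n : ℕ, 1 ≤ n → n ≤ L → ∀ i : ℕ, 1 ≤ i → i ≤ n → i < L →
      u n i = p / ((n : ℝ) * p + 1 - p))
    (hu2 : ∀ n : ℕ, 1 ≤ n → n ≤ L → ∀ i : ℕ, n < i → i < L →
      u n i = (1 - p) ^ (i - n) * p / ((n : ℝ) * p + 1 - p))
    (hu3 : ∀ n : ℕ, 1 ≤ n → n ≤ L →
      u n L = (1 - p) ^ (L - n) / ((n : ℝ) * p + 1 - p))
    (C : ℕ → ℝ → ℝ)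
    (hC : ∀ (n : ℕ) (W : ℝ),
      C n W = (∑ i ∈ Finset.Icc 1 L, (i : ℝ) * u n i)
        + W * ∑ i ∈ Finset.Icc n L, u n i)
    (Wh : ℕ → ℝ)
    (hWh : ∀ i : ℕ,
      Wh i = (i : ℝ) * ((i : ℝ) - 1) * p / 2 + (i : ℝ)
        - (i : ℝ) * (1 - p) ^ (L - i)) :
    (∀ i : ℕ, 1 ≤ i → i ≤ L - 1 → C i (Wh i) = C (i + 1) (Wh i)) ∧
      C L (Wh L) = L := by
  have hd : ∀ n : ℕ, 1 ≤ n → ((n : ℝ) * p + 1 - p) ≠ 0 := by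
    intro n hn
    have h1 : (1 : ℝ) ≤ (n : ℝ) := by exact_mod_cast hn
    nlinarith
  -- the tail sum: `(np+1-p) · Σ_{i=n}^{L} uⁿ(i) = 1`
  have keyT : ∀ n : ℕ, 1 ≤ n → n ≤ L →
      ((n : ℝ) * p + 1 - p) * ∑ i ∈ Finset.Icc n L, u n i = 1 := by
    intro n h1 h2
    have hdn := hd n h1
    rw [← Finset.Ico_insert_right h2, Finset.sum_insert (by simp)]
    have hval : ∀ i ∈ Finset.Ico n L,
        u n i = (1 - p) ^ (i - n) * (p / ((n : ℝ) * p + 1 - p)) := by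
      intro i hi
      obtain ⟨hni, hiL⟩ := Finset.mem_Ico.mp hi
      rcases eq_or_lt_of_le hni with rfl | hlt
      · rw [hu1 _ h1 h2 _ h1 le_rfl hiL, Nat.sub_self, pow_zero, one_mul]
      · rw [hu2 _ h1 h2 _ hlt hiL, mul_div_assoc]
    rw [Finset.sum_congr rfl hval, Finset.sum_Ico_eq_sum_range]
    simp only [Nat.add_sub_cancel_left]
    rw [← Finset.sum_mul, hu3 n h1 h2]
    have hg := stmt5_g1 p (L - n)
    field_simp [hdn]
    linear_combination hg
  -- the head sum: `p(np+1-p) · Σ_{i=1}^{L} i·uⁿ(i) = p²n(n-1)/2 + pn + q - q^{L-n+1}`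
  have keyS : ∀ n : ℕ, 1 ≤ n → n ≤ L →
      p * ((n : ℝ) * p + 1 - p) * ∑ i ∈ Finset.Icc 1 L, (i : ℝ) * u n i
        = p ^ 2 * n * (n - 1) / 2 + p * n + (1 - p) - (1 - p) ^ (L - n + 1) := by
    intro n h1 h2
    have hdn := hd n h1
    have hL1 : 1 ≤ L := le_trans h1 h2
    rw [← Finset.Ico_insert_right hL1, Finset.sum_insert (by simp)]
    rw [← Finset.sum_Ico_consecutive (fun i => (i : ℝ) * u n i) h1 h2]
    have hval1 : ∀ i ∈ Finset.Ico 1 n,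
        (i : ℝ) * u n i = (i : ℝ) * (p / ((n : ℝ) * p + 1 - p)) := by
      intro i hi
      obtain ⟨h1i, hin⟩ := Finset.mem_Ico.mp hi
      rw [hu1 n h1 h2 i h1i (le_of_lt hin) (lt_of_lt_of_le hin h2)]
    have hval2 : ∀ i ∈ Finset.Ico n L,
        (i : ℝ) * u n i = (i : ℝ) * ((1 - p) ^ (i - n) * (p / ((n : ℝ) * p + 1 - p))) := by
      intro i hi
      obtain ⟨hni, hiL⟩ := Finset.mem_Ico.mp hi
      rcases eq_or_lt_of_le hni with rfl | hlt
      · rw [hu1 _ h1 h2 _ h1 le_rfl hiL, Nat.sub_self, pow_zero, one_mul]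
      · rw [hu2 _ h1 h2 _ hlt hiL, mul_div_assoc]
    have e1 : ∑ i ∈ Finset.Ico 1 n, (i : ℝ) * (p / ((n : ℝ) * p + 1 - p))
        = (n : ℝ) * ((n : ℝ) - 1) / 2 * (p / ((n : ℝ) * p + 1 - p)) := by
      rw [← Finset.sum_mul]
      congr 1
      rw [← stmt5_gauss n, Finset.range_eq_Ico,
        ← Finset.sum_Ico_consecutive (fun i => (i : ℝ)) (Nat.zero_le 1) h1]
      simp
    rw [Finset.sum_congr rfl hval1, e1, Finset.sum_congr rfl hval2,
      Finset.sum_Ico_eq_sum_range]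
    simp only [Nat.add_sub_cancel_left]
    have e2 : ∑ k ∈ Finset.range (L - n),
        ((n + k : ℕ) : ℝ) * ((1 - p) ^ k * (p / ((n : ℝ) * p + 1 - p)))
        = ((n : ℝ) * ∑ k ∈ Finset.range (L - n), (1 - p) ^ k
          + ∑ k ∈ Finset.range (L - n), (k : ℝ) * (1 - p) ^ k)
            * (p / ((n : ℝ) * p + 1 - p)) := by
      rw [add_mul, Finset.mul_sum, Finset.sum_mul, Finset.sum_mul, ← Finset.sum_add_distrib]
      apply Finset.sum_congr rfl
      intro k _
      push_cast
      ring
    rw [hu3 n h1 h2, e2]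
    have hg1 := stmt5_g1 p (L - n)
    have hg2 := stmt5_g2 p (L - n)
    have hm : ((L : ℝ)) = (n : ℝ) + ((L - n : ℕ) : ℝ) := by
      rw [Nat.cast_sub h2]; ring
    rw [show ((1:ℝ) - p) ^ (L - n + 1) = (1 - p) ^ (L - n) * (1 - p) from pow_succ _ _]
    generalize hA : (∑ k ∈ Finset.range (L - n), (1 - p) ^ k) = A at hg1 ⊢
    generalize hB : (∑ k ∈ Finset.range (L - n), (k : ℝ) * (1 - p) ^ k) = B at hg2 ⊢
    generalize hQ : ((1 : ℝ) - p) ^ (L - n) = Q at hg1 hg2 ⊢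
    have expand : p * ((n : ℝ) * p + 1 - p) *
        ((L : ℝ) * (Q / ((n : ℝ) * p + 1 - p)) +
          ((n : ℝ) * ((n : ℝ) - 1) / 2 * (p / ((n : ℝ) * p + 1 - p))
            + ((n : ℝ) * A + B) * (p / ((n : ℝ) * p + 1 - p))))
        = p * (L : ℝ) * Q + p ^ 2 * ((n : ℝ) * ((n : ℝ) - 1) / 2)
          + p ^ 2 * ((n : ℝ) * A + B) := by
      have hinv : ((n : ℝ) * p + 1 - p) * ((n : ℝ) * p + 1 - p)⁻¹ = 1 := mul_inv_cancel₀ hdn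
      simp only [div_eq_mul_inv]
      linear_combination (p * (L : ℝ) * Q + p ^ 2 * ((n : ℝ) * ((n : ℝ) - 1) / 2)
        + p ^ 2 * ((n : ℝ) * A + B)) * hinv
    rw [expand]
    linear_combination ((n : ℝ) * p) * hg1 + hg2 + (p * Q) * hm
  constructor
  · -- thresholds `i` and `i+1` are cost-equivalent at `W = Wh i`
    intro i hi1 hi2
    have hiL : i + 1 ≤ L := by omega
    have hiL' : i ≤ L := by omega
    have hS1 := keyS i hi1 hiL'
    have hS2 := keyS (i + 1) (by omega) hiL
    have hT1 := keyT i hi1 hiL'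
    have hT2 := keyT (i + 1) (by omega) hiL
    obtain ⟨j, hj⟩ : ∃ j, L = i + 1 + j := ⟨L - (i + 1), by omega⟩
    rw [show L - i + 1 = j + 2 from by omega] at hS1
    rw [show L - (i + 1) + 1 = j + 1 from by omega] at hS2
    rw [hC, hC, hWh, show L - i = j + 1 from by omega]
    push_cast at hS2 hT2 ⊢
    have d2 := hd (i + 1) (by omega)
    push_cast at d2
    have hne : p * ((i : ℝ) * p + 1 - p) * (((i : ℝ) + 1) * p + 1 - p) ≠ 0 :=
      mul_ne_zero (mul_ne_zero (ne_of_gt hp0) (hd i hi1)) d2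
    apply mul_right_cancel₀ hne
    linear_combination ((((i : ℝ) + 1) * p + 1 - p)) * hS1 - ((i : ℝ) * p + 1 - p) * hS2
      + (((i : ℝ) * ((i : ℝ) - 1) * p / 2 + (i : ℝ) - (i : ℝ) * (1 - p) ^ (j + 1)) * p
          * (((i : ℝ) + 1) * p + 1 - p)) * hT1
      - (((i : ℝ) * ((i : ℝ) - 1) * p / 2 + (i : ℝ) - (i : ℝ) * (1 - p) ^ (j + 1)) * p
          * ((i : ℝ) * p + 1 - p)) * hT2
  · -- the never-schedule cost
    have hL1 : 1 ≤ L := by omega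
    have hS := keyS L hL1 le_rfl
    have hT := keyT L hL1 le_rfl
    rw [show L - L + 1 = 1 from by omega, pow_one] at hS
    rw [hC, hWh, show L - L = 0 from by omega, pow_zero]
    have hne : p * ((L : ℝ) * p + 1 - p) ≠ 0 :=
      mul_ne_zero (ne_of_gt hp0) (hd L hL1)
    apply mul_right_cancel₀ hne
    linear_combination hS
      + (((L : ℝ) * ((L : ℝ) - 1) * p / 2 + (L : ℝ) - (L : ℝ) * 1) * p) * hT
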